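/- Let (R, 𝔪) be an Artinian local ring and let φ : B → C be an injective homomorphism of R-algebras with C flat over R. Then B is flat over R if and only if the induced map B/𝔪B → C/𝔪C is injective. -/

import Mathlib

open TensorProduct LinearMap Function

section aux
variable {R : Type*} [CommRing R]
variable {M N : Type*} [AddCommGroup M] [AddCommGroup N] [Module R M] [Module R N]

lemma aux_smul_mem {J K : Ideal R} {x : R} (h2 : ∀ κ ∈ K, x * κ ∈ J)
    {m : M} (hm : m ∈ K • (⊤ : Submodule R M)) : x • m ∈ J • (⊤ : Submodule R M) := by
  refine Submodule.smul_induction_on hm ?_ ?_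
  · intro r hr n _
    rw [smul_smul]
    exact Submodule.smul_mem_smul (h2 r hr) trivial
  · intro a b ha hb
    rw [smul_add]
    exact add_mem ha hb

lemma aux_colon [Module.Flat R N] {J K : Ideal R} {x : R}
    (h1 : ∀ r : R, x * r ∈ J → r ∈ K) (h2 : ∀ κ ∈ K, x * κ ∈ J)
    {c : N} (hc : x • c ∈ J • (⊤ : Submodule R N)) : c ∈ K • (⊤ : Submodule R N) := by
  have hle : K ≤ Submodule.comap (LinearMap.lsmul R R x) J := by
    intro r hr
    simpa [smul_eq_mul] using h2 r hr
  set ψ : (R ⧸ K) →ₗ[R] R ⧸ J := Submodule.mapQ K J (LinearMap.lsmul R R x) hle with hψdef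
  have hψmk : ∀ r : R, ψ (Submodule.Quotient.mk r) = Submodule.Quotient.mk (x * r) := by
    intro r
    rw [hψdef, Submodule.mapQ_apply, lsmul_apply, smul_eq_mul]
  have hψ : Function.Injective ψ := by
    rw [injective_iff_map_eq_zero]
    intro a ha
    obtain ⟨r, rfl⟩ := Submodule.Quotient.mk_surjective _ a
    rw [hψmk, Submodule.Quotient.mk_eq_zero] at ha
    rw [Submodule.Quotient.mk_eq_zero]
    exact h1 r ha
  have hT : Function.Injective (ψ.lTensor N) :=
    Module.Flat.lTensor_preserves_injective_linearMap (M := N) ψ hψ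
  set eK := tensorQuotEquivQuotSMul N K with heK
  set eJ := tensorQuotEquivQuotSMul N J with heJ
  have hle2 : K • (⊤ : Submodule R N) ≤ Submodule.comap (LinearMap.lsmul R N x) (J • ⊤) := by
    intro n hn
    simpa using aux_smul_mem h2 hn
  set m₁ : (N ⧸ (K • (⊤ : Submodule R N))) →ₗ[R] N ⧸ (J • (⊤ : Submodule R N)) :=
    Submodule.mapQ _ _ (LinearMap.lsmul R N x) hle2 with hm₁def
  have hm₁mk : ∀ n : N, m₁ (Submodule.Quotient.mk n) = Submodule.Quotient.mk (x • n) := by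
    intro n
    rw [hm₁def, Submodule.mapQ_apply, lsmul_apply]
  have claim : m₁ ∘ₗ eK.toLinearMap = eJ.toLinearMap ∘ₗ ψ.lTensor N := by
    apply TensorProduct.ext'
    intro c y
    obtain ⟨r, rfl⟩ := Submodule.Quotient.mk_surjective _ y
    have hk : eK (c ⊗ₜ[R] (Submodule.Quotient.mk r : R ⧸ K)) = Submodule.Quotient.mk (r • c) :=
      tensorQuotEquivQuotSMul_tmul_mk K c r
    have hj : eJ (c ⊗ₜ[R] (Submodule.Quotient.mk (x * r) : R ⧸ J))
        = Submodule.Quotient.mk ((x * r) • c) :=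
      tensorQuotEquivQuotSMul_tmul_mk J c (x * r)
    simp only [LinearMap.coe_comp, Function.comp_apply, LinearEquiv.coe_coe, lTensor_tmul]
    rw [hk, hψmk, hj, hm₁mk, smul_smul]
  have h3 : Function.Injective ⇑(m₁ ∘ₗ eK.toLinearMap) := by
    rw [claim, LinearMap.coe_comp]
    exact (eJ.injective).comp hT
  have hm₁ : Function.Injective m₁ := by
    intro a b hab
    obtain ⟨a', rfl⟩ := eK.surjective a
    obtain ⟨b', rfl⟩ := eK.surjective b
    have : (m₁ ∘ₗ eK.toLinearMap) a' = (m₁ ∘ₗ eK.toLinearMap) b' := by simpa using hab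
    exact congrArg eK (h3 this)
  have h0 : m₁ (Submodule.Quotient.mk c) = 0 := by
    rw [hm₁mk, Submodule.Quotient.mk_eq_zero]
    exact hc
  have := hm₁ (h0.trans (map_zero m₁).symm)
  rwa [Submodule.Quotient.mk_eq_zero] at this


end aux

section main
variable {R : Type*} [CommRing R] [IsArtinianRing R] [IsLocalRing R]
variable {M N : Type*} [AddCommGroup M] [AddCommGroup N] [Module R M] [Module R N]

lemma aux_nilpotent : ∃ n, (IsLocalRing.maximalIdeal R) ^ n = ⊥ := by
  obtain ⟨n, hn⟩ := IsArtinianRing.isNilpotent_jacobson_bot (R := R)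
  exact ⟨n, by rwa [IsLocalRing.jacobson_eq_maximalIdeal ⊥ bot_ne_top] at hn⟩

/-- There is a nonzero `x` whose annihilator is exactly the maximal ideal. -/
lemma aux_exists_socle :
    ∃ x : R, x ≠ 0 ∧ (∀ r ∈ IsLocalRing.maximalIdeal R, x * r = 0) ∧
      (∀ r : R, x * r = 0 → r ∈ IsLocalRing.maximalIdeal R) := by
  classical
  have hex : ∃ n, (IsLocalRing.maximalIdeal R) ^ n = ⊥ := aux_nilpotent
  set n := Nat.find hex with hndef
  have hn : (IsLocalRing.maximalIdeal R) ^ n = ⊥ := Nat.find_spec hex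
  have hn0 : n ≠ 0 := by
    intro h
    rw [h, pow_zero, Ideal.one_eq_top] at hn
    have h1 : (1 : R) ∈ (⊥ : Ideal R) := hn ▸ Submodule.mem_top
    rw [Submodule.mem_bot] at h1
    exact one_ne_zero h1
  have hprev : (IsLocalRing.maximalIdeal R) ^ (n - 1) ≠ ⊥ :=
    Nat.find_min hex (Nat.sub_lt (Nat.pos_of_ne_zero hn0) one_pos)
  obtain ⟨x, hx₁, hx₂⟩ := Submodule.exists_mem_ne_zero_of_ne_bot hprev
  refine ⟨x, hx₂, ?_, ?_⟩
  · intro r hr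
    have : x * r ∈ (IsLocalRing.maximalIdeal R) ^ (n - 1) * IsLocalRing.maximalIdeal R :=
      Ideal.mul_mem_mul hx₁ hr
    rw [← pow_succ, Nat.sub_add_cancel (Nat.one_le_iff_ne_zero.mpr hn0), hn] at this
    simpa using this
  · intro r hr
    by_contra hrm
    have hu : IsUnit r := by
      rw [← IsLocalRing.notMem_maximalIdeal]
      exact hrm
    obtain ⟨u, rfl⟩ := hu
    apply hx₂
    have h3 : x * ↑u * ↑u⁻¹ = x := Units.mul_inv_cancel_right x u
    rw [← h3, hr, zero_mul]

lemma aux_fwd [Module.Flat R M] (f : M →ₗ[R] N) (hf : Function.Injective f) (m : M)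
    (hm : f m ∈ (IsLocalRing.maximalIdeal R) • (⊤ : Submodule R N)) :
    m ∈ (IsLocalRing.maximalIdeal R) • (⊤ : Submodule R M) := by
  obtain ⟨x, hx0, hxann, hxann'⟩ := aux_exists_socle (R := R)
  -- x • f m = 0
  have h1 : x • f m = 0 := by
    refine Submodule.smul_induction_on hm ?_ ?_
    · intro r hr c _
      rw [smul_smul, hxann r hr, zero_smul]
    · intro a b ha hb
      rw [smul_add, ha, hb, add_zero]
  have h2 : x • m = 0 := by
    apply hf
    rw [map_smul, h1, map_zero]
  -- use flatness
  set ψ : (R ⧸ IsLocalRing.maximalIdeal R) →ₗ[R] R :=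
    Submodule.liftQ _ (LinearMap.toSpanSingleton R R x)
      (by intro r hr
          rw [LinearMap.mem_ker, LinearMap.toSpanSingleton_apply, smul_eq_mul, mul_comm]
          exact hxann r hr) with hψdef
  have hψmk : ∀ r : R, ψ (Submodule.Quotient.mk r) = r • x := by
    intro r
    rw [hψdef, Submodule.liftQ_apply, LinearMap.toSpanSingleton_apply]
  have hψ : Function.Injective ψ := by
    rw [injective_iff_map_eq_zero]
    intro a ha
    obtain ⟨r, rfl⟩ := Submodule.Quotient.mk_surjective _ a
    rw [hψmk] at ha
    rw [Submodule.Quotient.mk_eq_zero]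
    exact hxann' r (by rw [mul_comm]; simpa [smul_eq_mul] using ha)
  have hT : Function.Injective (ψ.rTensor M) :=
    Module.Flat.rTensor_preserves_injective_linearMap (M := M) ψ hψ
  set e := quotTensorEquivQuotSMul M (IsLocalRing.maximalIdeal R) with he
  -- the composite map M⧸𝔪M → M, [m] ↦ x • m, is injective
  have key : Submodule.Quotient.mk (p := (IsLocalRing.maximalIdeal R) • (⊤ : Submodule R M)) m
      = 0 := by
    have comp0 : (TensorProduct.lid R M) (ψ.rTensor M (e.symm (Submodule.Quotient.mk m)))
        = x • m := by
      have hs : e.symm (Submodule.Quotient.mk m) = (Submodule.Quotient.mk (1 : R)) ⊗ₜ[R] m :=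
        quotTensorEquivQuotSMul_symm_mk (IsLocalRing.maximalIdeal R) m
      rw [hs]
      rw [LinearMap.rTensor_tmul, hψmk, TensorProduct.lid_tmul, one_smul]
    apply e.symm.injective
    rw [map_zero]
    apply hT
    apply (TensorProduct.lid R M).injective
    rw [comp0, h2, map_zero, map_zero]
  rwa [Submodule.Quotient.mk_eq_zero] at key


lemma aux_exists_corank_one {I : Ideal R} (hI : I ≠ ⊥) :
    ∃ (J : Ideal R) (x : R), J < I ∧ x ∈ I ∧ I ≤ J ⊔ Ideal.span {x} ∧
      (∀ r : R, x * r ∈ J → r ∈ IsLocalRing.maximalIdeal R) ∧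
      (∀ κ ∈ IsLocalRing.maximalIdeal R, x * κ ∈ J) := by
  set 𝔪 := IsLocalRing.maximalIdeal R with h𝔪
  -- 𝔪 * I < I
  have hmI : 𝔪 * I ≠ I := by
    intro h
    obtain ⟨n, hn⟩ := aux_nilpotent (R := R)
    have hpow : ∀ j : ℕ, I ≤ 𝔪 ^ j * I := by
      intro j
      induction j with
      | zero => rw [pow_zero, one_mul]
      | succ j ih =>
        calc I ≤ 𝔪 ^ j * I := ih
        _ = 𝔪 ^ j * (𝔪 * I) := by rw [h]
        _ = 𝔪 ^ (j + 1) * I := by rw [← mul_assoc, ← pow_succ]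
    have : I ≤ ⊥ := by
      refine le_trans (hpow n) ?_
      rw [← hn]
      exact Ideal.mul_le_left
    exact hI (le_bot_iff.mp this)
  have hmIle : 𝔪 * I ≤ I := Ideal.mul_le_right
  -- pick x₀ ∈ I \ 𝔪I
  obtain ⟨x₀, hx₀I, hx₀m⟩ : ∃ x₀, x₀ ∈ I ∧ x₀ ∉ 𝔪 * I := by
    by_contra hcon
    push_neg at hcon
    exact hmI (le_antisymm hmIle fun v hv => hcon v hv)
  -- Zorn
  set S : Set (Ideal R) := {J | 𝔪 * I ≤ J ∧ J ≤ I ∧ x₀ ∉ J} with hS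
  obtain ⟨J, -, hJS, hJmax⟩ : ∃ J, 𝔪 * I ≤ J ∧ Maximal (· ∈ S) J := by
    apply zorn_le_nonempty₀ S ?_ (𝔪 * I) ⟨le_rfl, hmIle, hx₀m⟩
    intro c hcS hchain J₀ hJ₀
    refine ⟨sSup c, ⟨?_, ?_, ?_⟩, fun z hz => le_sSup hz⟩
    · exact le_trans (hcS hJ₀).1 (le_sSup hJ₀)
    · exact sSup_le fun z hz => (hcS hz).2.1
    · intro hx
      rw [Submodule.mem_sSup_of_directed ⟨J₀, hJ₀⟩ hchain.directedOn] at hx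
      obtain ⟨z, hz, hxz⟩ := hx
      exact (hcS hz).2.2 hxz
  obtain ⟨hmJ, hJI, hx₀J⟩ := hJS
  have hJltI : J < I := lt_of_le_of_ne hJI fun h => hx₀J (h ▸ hx₀I)
  refine ⟨J, x₀, hJltI, hx₀I, ?_, ?_, ?_⟩
  · -- I ≤ J ⊔ span x₀
    intro v hv
    by_contra hvJx
    have hvJ : v ∉ J := fun h => hvJx (Submodule.mem_sup_left h)
    have hx₀Jv : x₀ ∈ J ⊔ Ideal.span {v} := by
      by_contra hx₀Jv
      have hmem : J ⊔ Ideal.span {v} ∈ S := by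
        refine ⟨le_trans hmJ le_sup_left, sup_le hJI ?_, hx₀Jv⟩
        rw [Ideal.span_le, Set.singleton_subset_iff]
        exact hv
      have hle := hJmax hmem le_sup_left
      exact hvJ (hle (Submodule.mem_sup_right (Ideal.subset_span rfl)))
    obtain ⟨j, hj, w, hw, hjw⟩ := Submodule.mem_sup.mp hx₀Jv
    obtain ⟨c, rfl⟩ := Ideal.mem_span_singleton'.mp hw
    by_cases hc : c ∈ 𝔪
    · apply hx₀J
      rw [← hjw]
      exact add_mem hj (hmJ (Ideal.mul_mem_mul hc hv))
    · have hu : IsUnit c := IsLocalRing.notMem_maximalIdeal.mp hc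
      obtain ⟨u, rfl⟩ := hu
      apply hvJx
      have hv' : (↑u * v) = x₀ - j := by rw [← hjw]; ring
      have : v = ↑u⁻¹ * (x₀ - j) := by
        rw [← hv', ← mul_assoc, Units.inv_mul, one_mul]
      rw [this]
      refine Ideal.mul_mem_left _ _ ?_
      exact sub_mem (Submodule.mem_sup_right (Ideal.subset_span rfl)) (Submodule.mem_sup_left hj)
  · -- x₀ * r ∈ J → r ∈ 𝔪
    intro r hr
    by_contra hrm
    have hu : IsUnit r := IsLocalRing.notMem_maximalIdeal.mp hrm
    obtain ⟨u, rfl⟩ := hu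
    apply hx₀J
    have : x₀ = (x₀ * ↑u) * ↑u⁻¹ := by rw [Units.mul_inv_cancel_right]
    rw [this]
    exact Ideal.mul_mem_right _ _ hr
  · -- 𝔪 • x₀ ⊆ J
    intro κ hκ
    have hκx : κ * x₀ ∈ 𝔪 * I := Ideal.mul_mem_mul hκ hx₀I
    exact hmJ (by rwa [mul_comm x₀ κ])


/-- The key inductive step. -/
lemma aux_step [Module.Flat R N] (f : M →ₗ[R] N) (hf : Function.Injective f)
    (H : ∀ m : M, f m ∈ (IsLocalRing.maximalIdeal R) • (⊤ : Submodule R N) →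
      m ∈ (IsLocalRing.maximalIdeal R) • (⊤ : Submodule R M))
    {I J : Ideal R} {x₀ : R} (hJltI : J < I) (hx₀I : x₀ ∈ I)
    (hAsup : I ≤ J ⊔ Ideal.span {x₀})
    (hB : ∀ r : R, x₀ * r ∈ J → r ∈ IsLocalRing.maximalIdeal R)
    (hC : ∀ κ ∈ IsLocalRing.maximalIdeal R, x₀ * κ ∈ J)
    (hJinj : Function.Injective
      (f ∘ₗ (TensorProduct.lid R M).toLinearMap ∘ₗ rTensor M J.subtype)) :
    Function.Injective
      (f ∘ₗ (TensorProduct.lid R M).toLinearMap ∘ₗ rTensor M I.subtype) := by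
  have hJI : J ≤ I := hJltI.le
  rw [injective_iff_map_eq_zero]
  intro t ht
  have hmem : ∀ z : ↥I, z ∈ Submodule.comap I.subtype J ↔ (z : R) ∈ J := fun z => Iff.rfl
  -- the bilinear map β
  set δ : M →ₗ[R] N ⧸ (J • (⊤ : Submodule R N)) := (J • (⊤ : Submodule R N)).mkQ ∘ₗ f
    with hδdef
  set γ : R →ₗ[R] M →ₗ[R] (N ⧸ (J • (⊤ : Submodule R N))) :=
    (LinearMap.lsmul R (N ⧸ (J • (⊤ : Submodule R N)))).compl₂ δ with hγdef
  set β₀ : ↥I →ₗ[R] M →ₗ[R] (N ⧸ (J • (⊤ : Submodule R N))) := γ ∘ₗ I.subtype with hβ₀def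
  have hβ₀ : ∀ (i : ↥I) (m : M), β₀ i m = Submodule.Quotient.mk ((i : R) • f m) := by
    intro i m
    simp [hβ₀def, hγdef, hδdef]
  have hker : Submodule.comap I.subtype J ≤ ker β₀ := by
    intro i hi
    rw [mem_ker]
    ext m
    rw [hβ₀ i m, LinearMap.zero_apply, Submodule.Quotient.mk_eq_zero]
    exact Submodule.smul_mem_smul ((hmem i).mp hi) trivial
  set β := Submodule.liftQ (Submodule.comap I.subtype J) β₀ hker with hβdef
  set h := TensorProduct.lift β with hhdef
  set q := rTensor M (Submodule.comap I.subtype J).mkQ with hqdef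
  have hβmk : ∀ (i : ↥I) (m : M), β (Submodule.Quotient.mk i) m
      = Submodule.Quotient.mk ((i : R) • f m) := by
    intro i m
    rw [hβdef, Submodule.liftQ_apply, hβ₀]
  have hcomm : h ∘ₗ q = (J • (⊤ : Submodule R N)).mkQ ∘ₗ
      (f ∘ₗ (TensorProduct.lid R M).toLinearMap ∘ₗ rTensor M I.subtype) := by
    apply TensorProduct.ext'
    intro i m
    simp only [hhdef, hqdef, LinearMap.coe_comp, Function.comp_apply,
      rTensor_tmul, TensorProduct.lift.tmul, Submodule.mkQ_apply, LinearEquiv.coe_coe,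
      TensorProduct.lid_tmul, Submodule.subtype_apply, map_smul]
    rw [hβmk]
    simp [Submodule.Quotient.mk_smul]
  -- m₀ : M⧸𝔪M → N⧸J•⊤ is injective
  have hle3 : (IsLocalRing.maximalIdeal R) • (⊤ : Submodule R M) ≤
      Submodule.comap ((LinearMap.lsmul R N x₀) ∘ₗ f) (J • (⊤ : Submodule R N)) := by
    intro m hm
    have h1 : f m ∈ (IsLocalRing.maximalIdeal R) • (⊤ : Submodule R N) := by
      have h2 := Submodule.mem_map_of_mem (f := f) hm
      rw [Submodule.map_smul''] at h2
      exact Submodule.smul_mono le_rfl le_top h2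
    simp only [Submodule.mem_comap, LinearMap.coe_comp, Function.comp_apply, lsmul_apply]
    exact aux_smul_mem hC h1
  set m₀ : (M ⧸ (IsLocalRing.maximalIdeal R) • (⊤ : Submodule R M)) →ₗ[R]
      (N ⧸ (J • (⊤ : Submodule R N))) :=
    Submodule.mapQ _ _ ((LinearMap.lsmul R N x₀) ∘ₗ f) hle3 with hm₀def
  have hm₀mk : ∀ m : M, m₀ (Submodule.Quotient.mk m)
      = Submodule.Quotient.mk (x₀ • f m) := by
    intro m
    rw [hm₀def, Submodule.mapQ_apply]
    simp
  have hm₀ : Function.Injective m₀ := by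
    rw [injective_iff_map_eq_zero]
    intro a ha
    obtain ⟨m, rfl⟩ := Submodule.Quotient.mk_surjective _ a
    rw [hm₀mk, Submodule.Quotient.mk_eq_zero] at ha
    rw [Submodule.Quotient.mk_eq_zero]
    exact H m (aux_colon hB hC ha)
  -- the equivalence u : R⧸𝔪 ≃ I⧸J'
  set w : R →ₗ[R] (↥I ⧸ Submodule.comap I.subtype J) :=
    (Submodule.comap I.subtype J).mkQ ∘ₗ LinearMap.toSpanSingleton R ↥I ⟨x₀, hx₀I⟩ with hwdef
  have hwmk : ∀ r : R, w r = Submodule.Quotient.mk (r • (⟨x₀, hx₀I⟩ : ↥I)) := by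
    intro r
    simp [hwdef]
  have hcoe : ∀ r : R, ((r • (⟨x₀, hx₀I⟩ : ↥I) : ↥I) : R) = x₀ * r := by
    intro r
    simp [smul_eq_mul, mul_comm]
  have hwker : (IsLocalRing.maximalIdeal R) ≤ ker w := by
    intro r hr
    rw [mem_ker, hwmk, Submodule.Quotient.mk_eq_zero, hmem, hcoe]
    exact hC r hr
  set u := Submodule.liftQ _ w hwker with hudef
  have humk : ∀ r : R, u (Submodule.Quotient.mk r)
      = Submodule.Quotient.mk (r • (⟨x₀, hx₀I⟩ : ↥I)) := by
    intro r
    rw [hudef, Submodule.liftQ_apply, hwmk]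
  have huinj : Function.Injective u := by
    rw [injective_iff_map_eq_zero]
    intro a ha
    obtain ⟨r, rfl⟩ := Submodule.Quotient.mk_surjective _ a
    rw [humk, Submodule.Quotient.mk_eq_zero, hmem, hcoe] at ha
    rw [Submodule.Quotient.mk_eq_zero]
    exact hB r ha
  have husurj : Function.Surjective u := by
    intro a
    obtain ⟨i, rfl⟩ := Submodule.Quotient.mk_surjective _ a
    have hi : (i : R) ∈ J ⊔ Ideal.span {x₀} := hAsup i.2
    obtain ⟨j, hj, v, hv, hjv⟩ := Submodule.mem_sup.mp hi
    obtain ⟨c, rfl⟩ := Ideal.mem_span_singleton'.mp hv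
    refine ⟨Submodule.Quotient.mk c, ?_⟩
    rw [humk, Submodule.Quotient.eq, hmem]
    have h4 : ((c • (⟨x₀, hx₀I⟩ : ↥I) - i : ↥I) : R) = x₀ * c - (i : R) := by
      rw [Submodule.coe_sub, hcoe]
    rw [h4, mul_comm, ← hjv]
    simpa using neg_mem hj
  set uE := LinearEquiv.ofBijective u ⟨huinj, husurj⟩ with huEdef
  -- h is injective
  have hrel : h ∘ₗ (TensorProduct.congr uE (LinearEquiv.refl R M)).toLinearMap
      = m₀ ∘ₗ (quotTensorEquivQuotSMul M (IsLocalRing.maximalIdeal R)).toLinearMap := by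
    apply TensorProduct.ext'
    intro y m
    obtain ⟨r, rfl⟩ := Submodule.Quotient.mk_surjective _ y
    have hq1 : (quotTensorEquivQuotSMul M (IsLocalRing.maximalIdeal R))
        ((Submodule.Quotient.mk r : R ⧸ IsLocalRing.maximalIdeal R) ⊗ₜ[R] m)
        = Submodule.Quotient.mk (r • m) := quotTensorEquivQuotSMul_mk_tmul _ r m
    simp only [LinearMap.coe_comp, Function.comp_apply, LinearEquiv.coe_coe,
      TensorProduct.congr_tmul, LinearEquiv.refl_apply]
    rw [hq1, hm₀mk, huEdef]
    change h (u (Submodule.Quotient.mk r) ⊗ₜ[R] m) = _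
    rw [humk, hhdef,
      TensorProduct.lift.tmul, hβmk, hcoe, map_smul, smul_smul, mul_comm x₀ r]
  have hinj_h : Function.Injective h := by
    have hcompinj : Function.Injective
        ⇑(h ∘ₗ (TensorProduct.congr uE (LinearEquiv.refl R M)).toLinearMap) := by
      rw [hrel, LinearMap.coe_comp]
      exact hm₀.comp (quotTensorEquivQuotSMul M (IsLocalRing.maximalIdeal R)).injective
    intro a b hab
    obtain ⟨a', rfl⟩ := (TensorProduct.congr uE (LinearEquiv.refl R M)).surjective a
    obtain ⟨b', rfl⟩ := (TensorProduct.congr uE (LinearEquiv.refl R M)).surjective b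
    have h5 : (h ∘ₗ (TensorProduct.congr uE (LinearEquiv.refl R M)).toLinearMap) a'
        = (h ∘ₗ (TensorProduct.congr uE (LinearEquiv.refl R M)).toLinearMap) b' := by
      exact hab
    exact congrArg _ (hcompinj h5)
  -- q t = 0
  have hqt : q t = 0 := by
    apply hinj_h
    have h6 := LinearMap.congr_fun hcomm t
    rw [LinearMap.comp_apply, LinearMap.comp_apply, ht, map_zero] at h6
    rw [map_zero]
    exact h6
  -- t lifts to J' ⊗ M
  have hrange : t ∈ range (rTensor M (Submodule.comap I.subtype J).subtype) := by
    rw [← rTensor_mkQ M (Submodule.comap I.subtype J), mem_ker]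
    exact hqt
  obtain ⟨s, rfl⟩ := hrange
  have hcomm2 : (f ∘ₗ (TensorProduct.lid R M).toLinearMap ∘ₗ rTensor M J.subtype)
        ∘ₗ rTensor M (Submodule.comapSubtypeEquivOfLe hJI).toLinearMap
      = (f ∘ₗ (TensorProduct.lid R M).toLinearMap ∘ₗ rTensor M I.subtype)
        ∘ₗ rTensor M (Submodule.comap I.subtype J).subtype := by
    apply TensorProduct.ext'
    intro z m
    simp only [LinearMap.coe_comp, Function.comp_apply, rTensor_tmul,
      LinearEquiv.coe_coe, TensorProduct.lid_tmul, Submodule.subtype_apply,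
      Submodule.comapSubtypeEquivOfLe_apply_coe]
  have hs0 : rTensor M (Submodule.comapSubtypeEquivOfLe hJI).toLinearMap s = 0 := by
    apply hJinj
    have h7 := LinearMap.congr_fun hcomm2 s
    rw [map_zero]
    exact h7.trans ht
  have hs : s = 0 := by
    have h8 := congrArg (rTensor M (Submodule.comapSubtypeEquivOfLe hJI).symm.toLinearMap) hs0
    rw [← rTensor_comp_apply] at h8
    have h9 : (Submodule.comapSubtypeEquivOfLe hJI).symm.toLinearMap ∘ₗ
        (Submodule.comapSubtypeEquivOfLe hJI).toLinearMap = LinearMap.id := by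
      ext z
      simp
    rw [h9, rTensor_id, map_zero] at h8
    simpa using h8
  rw [hs, map_zero]


lemma aux_bwd [Module.Flat R N] (f : M →ₗ[R] N) (hf : Function.Injective f)
    (H : ∀ m : M, f m ∈ (IsLocalRing.maximalIdeal R) • (⊤ : Submodule R N) →
      m ∈ (IsLocalRing.maximalIdeal R) • (⊤ : Submodule R M)) :
    Module.Flat R M := by
  rw [Module.Flat.iff_rTensor_injective']
  have hmain : ∀ I : Ideal R,
      Function.Injective (f ∘ₗ (TensorProduct.lid R M).toLinearMap ∘ₗ rTensor M I.subtype) := by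
    intro I
    refine WellFounded.induction
      (C := fun I : Ideal R => Function.Injective
        (f ∘ₗ (TensorProduct.lid R M).toLinearMap ∘ₗ rTensor M I.subtype))
      (IsWellFounded.wf : WellFounded ((· < ·) : Ideal R → Ideal R → Prop)) I ?_
    clear I
    intro I IH
    by_cases hI : I = ⊥
    · subst hI
      haveI : Subsingleton ↥(⊥ : Ideal R) :=
        ⟨fun a b => Subtype.ext
          (((Submodule.mem_bot R).mp a.2).trans ((Submodule.mem_bot R).mp b.2).symm)⟩
      intro a b _
      exact Subsingleton.elim a b
    · obtain ⟨J, x₀, hJltI, hx₀I, hAsup, hB, hC⟩ := aux_exists_corank_one hI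
      exact aux_step f hf H hJltI hx₀I hAsup hB hC (IH J hJltI)
  intro I a b hab
  apply hmain I
  simp only [LinearMap.coe_comp, Function.comp_apply]
  rw [hab]

end main

/-- Let `(R, 𝔪)` be an Artinian local ring and `φ : B → C` an injective homomorphism of
`R`-algebras with `C` flat over `R`.  Then `B` is flat over `R` iff the induced map
`B/𝔪B → C/𝔪C` is injective. -/
theorem stmt6 {R : Type*} [CommRing R] [IsArtinianRing R] [IsLocalRing R]
    {B C : Type*} [CommRing B] [CommRing C] [Algebra R B] [Algebra R C]
    (φ : B →ₐ[R] C) (hφ : Function.Injective φ) [Module.Flat R C] :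
    Module.Flat R B ↔
      Function.Injective
        (Ideal.quotientMap (I := Ideal.map (algebraMap R B) (IsLocalRing.maximalIdeal R)) (Ideal.map (algebraMap R C) (IsLocalRing.maximalIdeal R))
          φ.toRingHom
          (by
            rw [Ideal.map_le_iff_le_comap, Ideal.comap_comap]
            have h1 : φ.toRingHom.comp (algebraMap R B) = algebraMap R C := by
              ext x; simp
            rw [h1]
            exact Ideal.le_comap_map)) := by
  have hmem_B : ∀ b : B, b ∈ Ideal.map (algebraMap R B) (IsLocalRing.maximalIdeal R) ↔
      b ∈ (IsLocalRing.maximalIdeal R) • (⊤ : Submodule R B) := by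
    intro b
    rw [Ideal.smul_top_eq_map]
    exact Iff.rfl
  have hmem_C : ∀ c : C, c ∈ Ideal.map (algebraMap R C) (IsLocalRing.maximalIdeal R) ↔
      c ∈ (IsLocalRing.maximalIdeal R) • (⊤ : Submodule R C) := by
    intro c
    rw [Ideal.smul_top_eq_map]
    exact Iff.rfl
  have hφ' : Function.Injective φ.toLinearMap := hφ
  constructor
  · intro hflat
    rw [injective_iff_map_eq_zero]
    intro a ha
    obtain ⟨b, rfl⟩ := Ideal.Quotient.mk_surjective a
    rw [Ideal.quotientMap_mk, Ideal.Quotient.eq_zero_iff_mem] at ha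
    rw [Ideal.Quotient.eq_zero_iff_mem]
    refine (hmem_B b).mpr ?_
    exact aux_fwd φ.toLinearMap hφ' b ((hmem_C (φ b)).mp ha)
  · intro hinj
    apply aux_bwd φ.toLinearMap hφ'
    intro b hb
    have h1 : φ b ∈ Ideal.map (algebraMap R C) (IsLocalRing.maximalIdeal R) :=
      (hmem_C (φ b)).mpr hb
    have h3 : Ideal.Quotient.mk (Ideal.map (algebraMap R B) (IsLocalRing.maximalIdeal R)) b
        = 0 := by
      apply hinj
      rw [Ideal.quotientMap_mk, map_zero, Ideal.Quotient.eq_zero_iff_mem]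
      exact h1
    rw [Ideal.Quotient.eq_zero_iff_mem] at h3
    exact (hmem_B b).mp h3
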